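/- Let h : ℂ → ℂ be differentiable on ℂ ∖ {−1}, satisfy the inversion symmetry h(1/z) = h(z) for all z with z ≠ 0 and z ≠ −1, be bounded at infinity (there is C with |h(z)| ≤ C whenever |z| ≥ 2), and have at most a simple pole at −1 (there is C′ with |(z+1)·h(z)| ≤ C′ whenever 0 < |z+1| ≤ 1/2). Then h is constant on ℂ ∖ {−1}. -/

import Mathlib

open Filter Topology Asymptotics Bornology


open Complex

/-- Liouville-type argument concluding the proof of Lemma 5.2(iv): a function
holomorphic off `−1`, symmetric under `z ↦ 1/z`, bounded at infinity and with at most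
a simple pole at `−1` is constant. -/
theorem liouville_with_inversion_symmetry (h : ℂ → ℂ)
    (hdiff : DifferentiableOn ℂ h {(-1 : ℂ)}ᶜ)
    (hsym : ∀ z : ℂ, z ≠ 0 → z ≠ -1 → h (1 / z) = h z)
    (hbdd : ∃ C : ℝ, ∀ z : ℂ, 2 ≤ ‖z‖ → ‖h z‖ ≤ C)
    (hpole : ∃ C' : ℝ, ∀ z : ℂ, 0 < ‖z + 1‖ → ‖z + 1‖ ≤ 1 / 2 →
      ‖(z + 1) * h z‖ ≤ C') :
    ∃ c : ℂ, ∀ z : ℂ, z ≠ -1 → h z = c := by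
  obtain ⟨C, hC⟩ := hbdd
  obtain ⟨C', hC'⟩ := hpole
  set F : ℂ → ℂ := fun z => (z + 1) * h z with hF
  have hopen : IsOpen ({(-1 : ℂ)}ᶜ) := isOpen_compl_singleton
  have hdF : ∀ z : ℂ, z ≠ -1 → DifferentiableAt ℂ F z := by
    intro z hz
    have : DifferentiableAt ℂ h z :=
      (hdiff.differentiableAt (hopen.mem_nhds hz)).restrictScalars ℂ
    exact (differentiableAt_id.add (differentiableAt_const 1)).mul this
  -- eventual facts near -1
  have hmem : ∀ᶠ z in 𝓝 (-1 : ℂ), ‖z + 1‖ ≤ 1/2 ∧ z ≠ 0 := by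
    have h1 : ∀ᶠ z in 𝓝 (-1 : ℂ), ‖z + 1‖ ≤ 1/2 := by
      filter_upwards [Metric.closedBall_mem_nhds (-1 : ℂ) (by norm_num : (0:ℝ) < 1/2)] with z hz
      simpa [Complex.dist_eq, sub_neg_eq_add] using hz
    have h2 : ∀ᶠ z in 𝓝 (-1 : ℂ), z ≠ 0 := isOpen_compl_singleton.eventually_mem (by norm_num)
    exact h1.and h2
  -- F tends to a limit L at -1
  have hdF' : ∀ᶠ z in 𝓝[≠] (-1 : ℂ), DifferentiableAt ℂ F z := by
    filter_upwards [self_mem_nhdsWithin] with z hz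
    exact hdF z hz
  have hbF : IsBoundedUnder (· ≤ ·) (𝓝[≠] (-1:ℂ)) fun z => ‖F z - F (-1)‖ := by
    refine ⟨C' + ‖F (-1)‖, ?_⟩
    rw [eventually_map]
    filter_upwards [nhdsWithin_le_nhds hmem, self_mem_nhdsWithin] with z hz hz'
    have hzne : z ≠ -1 := hz'
    have h0 : 0 < ‖z + 1‖ :=
      norm_pos_iff.mpr (fun hc => hzne (by linear_combination hc))
    calc ‖F z - F (-1)‖ ≤ ‖F z‖ + ‖F (-1)‖ := norm_sub_le _ _
      _ ≤ C' + ‖F (-1)‖ :=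
          add_le_add_left (by simpa only [hF] using hC' z h0 hz.1) _
  set L := limUnder (𝓝[≠] (-1:ℂ)) F with hL
  have hFt : Tendsto F (𝓝[≠] (-1:ℂ)) (𝓝 L) :=
    tendsto_limUnder_of_differentiable_on_punctured_nhds_of_bounded_under hdF' hbF
  -- symmetry: F z = z * F (1/z)
  have hsymF : ∀ᶠ z in 𝓝[≠] (-1:ℂ), F z = z * F (1/z) := by
    filter_upwards [nhdsWithin_le_nhds hmem, self_mem_nhdsWithin] with z hz hz'
    have hzne : z ≠ -1 := hz'
    have hz0 : z ≠ 0 := hz.2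
    have heq : h (1/z) = h z := hsym z hz0 hzne
    have hzinv : z * (1/z) = 1 := by field_simp
    simp only [hF, heq]
    linear_combination -h z * hzinv
  -- 1/z tends to -1 within punctured nbhd
  have hinv : Tendsto (fun z : ℂ => 1/z) (𝓝[≠] (-1:ℂ)) (𝓝[≠] (-1:ℂ)) := by
    rw [tendsto_nhdsWithin_iff]
    constructor
    · have : ContinuousAt (fun z : ℂ => 1/z) (-1) := by
        apply ContinuousAt.div continuousAt_const continuousAt_id (by norm_num)
      have ht := this.tendsto
      norm_num at ht
      have ht' : Tendsto (fun z : ℂ => 1/z) (𝓝 (-1:ℂ)) (𝓝 (-1)) := by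
        simpa [one_div] using ht
      exact ht'.mono_left nhdsWithin_le_nhds
    · filter_upwards [nhdsWithin_le_nhds hmem, self_mem_nhdsWithin] with z hz hz'
      have hzne : z ≠ -1 := hz'
      intro hc
      have hc' : 1/z = -1 := hc
      rw [div_eq_iff hz.2] at hc'
      apply hzne
      linear_combination hc'
  have hFt2 : Tendsto (fun z => z * F (1/z)) (𝓝[≠] (-1:ℂ)) (𝓝 ((-1) * L)) := by
    exact (tendsto_id.mono_left nhdsWithin_le_nhds).mul (hFt.comp hinv)
  have hL0 : L = 0 := by
    have : L = (-1) * L := tendsto_nhds_unique (hFt.congr' hsymF) hFt2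
    have := this
    linear_combination (this) / 2
  rw [hL0] at hFt
  -- h = o((z+1)⁻¹) near -1
  have ho : (fun z => h z - h (-1)) =o[𝓝[≠] (-1:ℂ)] fun z => (z - (-1))⁻¹ := by
    rw [isLittleO_iff_tendsto']
    · have key : Tendsto (fun z => (z + 1) * (h z - h (-1))) (𝓝[≠] (-1:ℂ)) (𝓝 0) := by
        have h2 : Tendsto (fun z : ℂ => (z + 1) * h (-1)) (𝓝[≠] (-1:ℂ)) (𝓝 0) := by
          have : Tendsto (fun z : ℂ => (z + 1) * h (-1)) (𝓝 (-1:ℂ)) (𝓝 ((-1 + 1) * h (-1))) :=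
            ((continuous_id.add continuous_const).mul continuous_const).tendsto _
          simpa using this.mono_left nhdsWithin_le_nhds
        have := hFt.sub h2
        simpa [mul_sub] using this
      apply key.congr'
      filter_upwards [self_mem_nhdsWithin] with z hz
      have : z - (-1) ≠ 0 := sub_ne_zero.2 hz
      field_simp
      ring
    · filter_upwards [self_mem_nhdsWithin] with z hz hc
      exact absurd (inv_eq_zero.1 hc) (sub_ne_zero.2 hz)
  set H := Function.update h (-1) (limUnder (𝓝[≠] (-1:ℂ)) h) with hH
  have hHd : Differentiable ℂ H := by
    have := Complex.differentiableOn_update_limUnder_of_isLittleO (s := Set.univ)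
      (univ_mem) (by simpa [Set.diff_eq, Set.inter_comm] using hdiff.mono (by simp [Set.diff_subset])) ho
    rw [← differentiableOn_univ]
    exact this
  -- boundedness of H
  have hbH : IsBounded (Set.range H) := by
    obtain ⟨B, hB⟩ := (isCompact_closedBall (0:ℂ) 2).exists_bound_of_continuousOn
      (hHd.continuous.continuousOn (s := Metric.closedBall 0 2))
    rw [isBounded_iff_forall_norm_le]
    refine ⟨max B C, ?_⟩
    rintro x ⟨z, rfl⟩
    rcases le_or_gt ‖z‖ 2 with hz | hz
    · exact le_trans (hB z (by simpa [Metric.mem_closedBall, Complex.dist_eq] using hz)) (le_max_left _ _)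
    · have hzne : z ≠ -1 := by
        intro hc; rw [hc] at hz; norm_num at hz
      have : H z = h z := Function.update_of_ne hzne _ _
      rw [this]
      exact le_trans (show ‖h z‖ ≤ C by simpa using hC z hz.le)
        (le_max_right _ _)
  obtain ⟨c, hc⟩ := hHd.exists_const_forall_eq_of_bounded hbH
  refine ⟨c, fun z hz => ?_⟩
  have : H z = h z := Function.update_of_ne hz _ _
  rw [← this]
  exact hc z
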